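/- Let n ≥ 1 and 0 ≤ r ≤ n be integers and let x_1, …, x_n be real numbers, with x_0 := 0. Then Σ_λ [∏_{j=1}^n 1/m_j(λ)!] · [∏_{i=1}^r (n−λ_i−i+2)(x_{λ_i} − x_{λ_i−1})] = e_r(x_1,…,x_n), where the sum is over all partitions λ = (λ_1 ≥ λ_2 ≥ ⋯ ≥ λ_r ≥ 1) with exactly r parts and λ_1 ≤ n, m_j(λ) denotes the number of indices i with λ_i = j, and e_r is the r-th elementary symmetric polynomial e_r(x) = Σ_{1≤i_1<⋯<i_r≤n} x_{i_1}⋯x_{i_r} (with e_0 = 1). -/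

import Mathlib

open Finset


lemma card_filter_val_lt (ρ t : ℕ) :
    ((univ : Finset (Fin ρ)).filter fun i => i.val < t).card = min t ρ := by
  rcases le_total t ρ with h | h
  · rw [min_eq_left h]
    have : ((univ : Finset (Fin ρ)).filter fun i => i.val < t).card = (range t).card := by
      refine Finset.card_nbij (fun i => (i : ℕ)) ?_ ?_ ?_
      · intro a ha; simp at ha ⊢; omega
      · intro a _ b _ hab; exact Fin.ext hab
      · intro v hv; simp at hv ⊢
        exact ⟨⟨v, lt_of_lt_of_le hv h⟩, by simp [hv]⟩
    simpa using this
  · rw [min_eq_right h]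
    rw [Finset.filter_true_of_mem (fun i _ => lt_of_lt_of_le i.isLt h)]
    simp

lemma initseg {ρ : ℕ} (U : Finset (Fin ρ))
    (h : ∀ i j : Fin ρ, i ≤ j → j ∈ U → i ∈ U) (i : Fin ρ) :
    i ∈ U ↔ i.val < U.card := by
  constructor
  · intro hi
    have hsub : (univ.filter fun k : Fin ρ => k.val ≤ i.val) ⊆ U := by
      intro k hk
      simp at hk
      exact h k i (by exact Fin.le_def.mpr hk) hi
    have := Finset.card_le_card hsub
    have hc : (univ.filter fun k : Fin ρ => k.val ≤ i.val).card = i.val + 1 := by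
      have := card_filter_val_lt ρ (i.val + 1)
      simp only [Nat.lt_succ_iff] at this
      rw [this]; omega
    omega
  · intro hi
    by_contra hni
    have hsub : U ⊆ univ.filter fun k : Fin ρ => k.val < i.val := by
      intro k hk
      simp only [mem_filter, mem_univ, true_and]
      by_contra hk2
      exact hni (h i k (Fin.le_def.mpr (by omega)) hk)
    have := Finset.card_le_card hsub
    rw [card_filter_val_lt] at this
    omega

lemma prod_range_cast_sub_eq_descFactorial (a m : ℕ) :
    (∏ t ∈ range m, ((a : ℝ) - t)) = (a.descFactorial m : ℝ) := by
  induction m with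
  | zero => simp
  | succ m ih =>
    rw [prod_range_succ, ih, Nat.descFactorial_succ]
    rcases le_or_gt (m + 1) a with h | h
    · push_cast [Nat.cast_sub (by omega : m ≤ a)]; ring
    · have h0 : a.descFactorial m = 0 ∨ (a:ℝ) - m = 0 := by
        rcases lt_or_ge a m with h2 | h2
        · left; exact Nat.descFactorial_eq_zero_iff_lt.mpr h2
        · right; have : a = m := by omega
          simp [this]
      rcases h0 with h0 | h0 <;> simp [h0, Nat.sub_eq_zero_of_le (by omega : a ≤ m)]

lemma cast_choose_eq (a m : ℕ) :
    (a.choose m : ℝ) = (a.descFactorial m : ℝ) / (m.factorial : ℝ) := by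
  rw [eq_div_iff (by positivity), ← Nat.cast_mul, mul_comm,
    ← Nat.descFactorial_eq_factorial_mul_choose]
/-- The level-by-level weight sum: `b` = max value level, `c` = count function,
`k` = number of already-used positions, `ρ` = number of parts remaining. -/
noncomputable def Lw (x : ℕ → ℝ) : ℕ → (ℕ → ℕ) → ℕ → ℕ → ℝ
  | 0, _, _, ρ => if ρ = 0 then 1 else 0
  | (b+1), c, k, ρ => ∑ s ∈ range (ρ+1),
      ((c (b+1) - k).choose s : ℝ) * (x (b+1) - x b) ^ s * Lw x b c (k + s) (ρ - s)

lemma Lw_congr (x : ℕ → ℝ) (b : ℕ) (c c' : ℕ → ℕ) (k ρ : ℕ)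
    (h : ∀ j, 1 ≤ j → j ≤ b → c j = c' j) : Lw x b c k ρ = Lw x b c' k ρ := by
  induction b generalizing k ρ with
  | zero => rfl
  | succ b ih =>
    rw [Lw, Lw, h (b+1) (by omega) le_rfl]
    exact Finset.sum_congr rfl fun s _ => by rw [ih _ _ fun j h1 h2 => h j h1 (by omega)]

lemma Lw_shift (x : ℕ → ℝ) (b : ℕ) (c : ℕ → ℕ) (k s ρ : ℕ) :
    Lw x b c (k + s) ρ = Lw x b (fun j => c j - s) k ρ := by
  induction b generalizing k ρ with
  | zero => rfl
  | succ b ih =>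
    rw [Lw, Lw]
    refine Finset.sum_congr rfl fun s' _ => ?_
    rw [show c (b+1) - (k + s) = c (b+1) - s - k by omega,
      show k + s + s' = (k + s') + s by omega, ih]
/-- Partitions with `ρ` parts, each part in `[1, b]`, as antitone tuples. -/
def Par (b ρ : ℕ) : Finset (Fin ρ → ℕ) :=
  (Fintype.piFinset fun _ : Fin ρ => Finset.Icc 1 b).filter
    (fun l => ∀ i j : Fin ρ, i ≤ j → l j ≤ l i)

lemma mem_Par {b ρ : ℕ} {l : Fin ρ → ℕ} :
    l ∈ Par b ρ ↔ (∀ i, 1 ≤ l i ∧ l i ≤ b) ∧ ∀ i j : Fin ρ, i ≤ j → l j ≤ l i := by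
  simp [Par, Fintype.mem_piFinset]

/-- `qc l v` = number of parts of `l` that are `≥ v`. -/
def qc {ρ : ℕ} (l : Fin ρ → ℕ) (v : ℕ) : ℕ := (univ.filter fun i => v ≤ l i).card

lemma qc_le {ρ : ℕ} (l : Fin ρ → ℕ) (v : ℕ) : qc l v ≤ ρ := by
  simpa [qc] using card_le_card (filter_subset _ (univ : Finset (Fin ρ)))

lemma qc_mono {ρ : ℕ} (l : Fin ρ → ℕ) {v w : ℕ} (h : v ≤ w) : qc l w ≤ qc l v := by
  apply card_le_card
  intro i hi; simp at hi ⊢; omega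

lemma qseg {ρ : ℕ} {l : Fin ρ → ℕ} (hl : ∀ i j : Fin ρ, i ≤ j → l j ≤ l i)
    (v : ℕ) (i : Fin ρ) : v ≤ l i ↔ i.val < qc l v := by
  have := initseg (univ.filter fun k => v ≤ l k) (fun a b hab hb => by
    simp only [mem_filter, mem_univ, true_and] at hb ⊢
    exact le_trans hb (hl a b hab)) i
  simpa [qc] using this

lemma card_filter_val_band (ρ a b : ℕ) (hab : a ≤ b) :
    ((univ : Finset (Fin ρ)).filter fun i => a ≤ i.val ∧ i.val < b).card
      = min b ρ - min a ρ := by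
  have h1 : ((univ : Finset (Fin ρ)).filter fun i => a ≤ i.val ∧ i.val < b)
      = ((univ : Finset (Fin ρ)).filter fun i => i.val < b) \
        ((univ : Finset (Fin ρ)).filter fun i => i.val < a) := by
    ext i; simp; omega
  rw [h1, card_sdiff_of_subset (by intro i hi; simp at hi ⊢; omega),
    card_filter_val_lt, card_filter_val_lt]

lemma mcard_eq {ρ : ℕ} {l : Fin ρ → ℕ} (hl : ∀ i j : Fin ρ, i ≤ j → l j ≤ l i) (j : ℕ) :
    (univ.filter fun i => l i = j).card = qc l j - qc l (j+1) := by
  have h1 : (univ.filter fun i => l i = j)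
      = (univ : Finset (Fin ρ)).filter fun i => qc l (j+1) ≤ i.val ∧ i.val < qc l j := by
    ext i
    simp only [mem_filter, mem_univ, true_and]
    have e1 := qseg hl j i
    have e2 := qseg hl (j+1) i
    omega
  rw [h1, card_filter_val_band _ _ _ (qc_mono l (by omega)),
    min_eq_left (qc_le l j), min_eq_left (qc_le l (j+1))]

lemma pcard_eq {ρ : ℕ} {l : Fin ρ → ℕ} (hl : ∀ i j : Fin ρ, i ≤ j → l j ≤ l i) (j : ℕ) :
    (univ.filter fun i => j < l i).card = qc l (j+1) := rfl
def chopf {ρ : ℕ} (l : Fin ρ → ℕ) (s : ℕ) : Fin (ρ - s) → ℕ :=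
  fun i => l ⟨i.val + s, by have := i.isLt; omega⟩

def gluef {ρ : ℕ} (s b : ℕ) (l' : Fin (ρ - s) → ℕ) : Fin ρ → ℕ :=
  fun i => if h : i.val < s then b + 1 else l' ⟨i.val - s, by have := i.isLt; omega⟩

lemma le_chopf_iff {ρ : ℕ} {l : Fin ρ → ℕ} (hl : ∀ i j : Fin ρ, i ≤ j → l j ≤ l i)
    (s v : ℕ) (i : Fin (ρ - s)) : v ≤ chopf l s i ↔ i.val + s < qc l v := by
  unfold chopf
  rw [qseg hl]

lemma qc_chopf {ρ : ℕ} {l : Fin ρ → ℕ} (hl : ∀ i j : Fin ρ, i ≤ j → l j ≤ l i)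
    (s v : ℕ) : qc (chopf l s) v = qc l v - s := by
  have h1 : (univ.filter fun i : Fin (ρ - s) => v ≤ chopf l s i)
      = univ.filter (fun i : Fin (ρ - s) => i.val < qc l v - s) := by
    ext i
    simp only [mem_filter, mem_univ, true_and, le_chopf_iff hl]
    have := qc_le l v
    have := i.isLt
    omega
  rw [qc, h1, card_filter_val_lt]
  have := qc_le l v
  omega

lemma chopf_mem_Par {b ρ : ℕ} {l : Fin ρ → ℕ} (hl : l ∈ Par (b+1) ρ) :
    chopf l (qc l (b+1)) ∈ Par b (ρ - qc l (b+1)) := by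
  obtain ⟨hb, hmono⟩ := mem_Par.mp hl
  rw [mem_Par]
  refine ⟨fun i => ⟨(hb _).1, ?_⟩, fun i j hij => ?_⟩
  · by_contra hgt
    have h3 : chopf l (qc l (b+1)) i
        = l ⟨i.val + qc l (b+1), by have := i.isLt; omega⟩ := rfl
    have h2 := (hb (⟨i.val + qc l (b+1), by have := i.isLt; omega⟩ : Fin ρ)).2
    have heq : b + 1 ≤ chopf l (qc l (b+1)) i := by omega
    rw [le_chopf_iff hmono] at heq
    have := i.isLt
    omega
  · exact hmono _ _ (by rw [Fin.le_def] at hij ⊢; simpa using by omega)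
lemma gluef_mem_Par {b ρ s : ℕ} {l' : Fin (ρ - s) → ℕ} (hl' : l' ∈ Par b (ρ - s)) :
    gluef s b l' ∈ Par (b+1) ρ := by
  obtain ⟨hb, hmono⟩ := mem_Par.mp hl'
  rw [mem_Par]
  constructor
  · intro i
    unfold gluef
    split
    · omega
    · next h =>
      refine ⟨(hb ⟨i.val - s, by have := i.isLt; omega⟩).1, ?_⟩
      have := (hb ⟨i.val - s, by have := i.isLt; omega⟩).2
      omega
  · intro i j hij
    rw [Fin.le_def] at hij
    unfold gluef
    split <;> split
    · omega
    · omega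
    · next h2 h3 =>
      exact le_trans (hb ⟨j.val - s, by have := j.isLt; omega⟩).2 (by omega)
    · exact hmono _ _ (by rw [Fin.le_def]; simpa using by omega)

lemma qc_gluef {b ρ s : ℕ} (hs : s ≤ ρ) {l' : Fin (ρ - s) → ℕ}
    (hb : ∀ i, l' i ≤ b) : qc (gluef s b l') (b+1) = s := by
  have h1 : (univ.filter fun i : Fin ρ => b + 1 ≤ gluef s b l' i)
      = univ.filter (fun i : Fin ρ => i.val < s) := by
    ext i
    simp only [mem_filter, mem_univ, true_and]
    unfold gluef
    split
    · omega
    · have := hb ⟨i.val - s, by have := i.isLt; omega⟩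
      omega
  rw [qc, h1, card_filter_val_lt]
  omega

lemma chopf_gluef {b ρ s : ℕ} {l' : Fin (ρ - s) → ℕ} : chopf (gluef s b l') s = l' := by
  funext i
  have hi := i.isLt
  show gluef s b l' ⟨i.val + s, by omega⟩ = l' i
  unfold gluef
  rw [dif_neg (by simp)]
  congr 1
  exact Fin.ext (by simp)

lemma gluef_chopf {b ρ : ℕ} {l : Fin ρ → ℕ} (hl : l ∈ Par (b+1) ρ) :
    gluef (qc l (b+1)) b (chopf l (qc l (b+1))) = l := by
  obtain ⟨hb, hmono⟩ := mem_Par.mp hl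
  funext i
  unfold gluef
  split
  · next h =>
    have := (qseg hmono (b+1) i).mpr h
    have := (hb i).2
    omega
  · next h =>
    show l _ = l i
    congr 1
    exact Fin.ext (by simp; omega)
lemma sum_Par_eq_Lw (x : ℕ → ℝ) (c : ℕ → ℕ) (b : ℕ) : ∀ ρ k : ℕ,
    (∑ l ∈ Par b ρ, ∏ j ∈ Icc 1 b,
        ((c j - (k + qc l (j+1))).choose (qc l j - qc l (j+1)) : ℝ)
          * (x j - x (j-1)) ^ (qc l j - qc l (j+1)))
      = Lw x b c k ρ := by
  induction b with
  | zero =>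
    intro ρ k
    match ρ with
    | 0 =>
      have h1 : Par 0 0 = {fun i : Fin 0 => 1} := by
        apply Finset.eq_singleton_iff_unique_mem.mpr
        refine ⟨mem_Par.mpr ⟨fun i => i.elim0, fun i => i.elim0⟩, fun y _ => ?_⟩
        funext i; exact i.elim0
      simp [h1, Lw]
    | (m+1) =>
      have h1 : Par 0 (m+1) = ∅ := by
        apply Finset.eq_empty_iff_forall_notMem.mpr
        intro l hl
        have := (mem_Par.mp hl).1 ⟨0, by omega⟩
        omega
      simp [h1, Lw]
  | succ b ih =>
    intro ρ k
    have key : (∑ l ∈ Par (b+1) ρ, ∏ j ∈ Icc 1 (b+1),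
        ((c j - (k + qc l (j+1))).choose (qc l j - qc l (j+1)) : ℝ)
          * (x j - x (j-1)) ^ (qc l j - qc l (j+1)))
        = ∑ p ∈ (range (ρ+1)).sigma (fun s => Par b (ρ - s)),
            ((c (b+1) - k).choose p.1 : ℝ) * (x (b+1) - x b) ^ p.1 *
              ∏ j ∈ Icc 1 b,
                ((c j - ((k + p.1) + qc p.2 (j+1))).choose (qc p.2 j - qc p.2 (j+1)) : ℝ)
                  * (x j - x (j-1)) ^ (qc p.2 j - qc p.2 (j+1)) := by
      refine Finset.sum_nbij' (fun l => ⟨qc l (b+1), chopf l (qc l (b+1))⟩)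
        (fun p => gluef p.1 b p.2) ?_ ?_ ?_ ?_ ?_
      · intro l hl
        rw [mem_sigma]
        exact ⟨mem_range.mpr (Nat.lt_succ_of_le (qc_le l (b+1))), chopf_mem_Par hl⟩
      · intro p hp
        rw [mem_sigma] at hp
        exact gluef_mem_Par hp.2
      · intro l hl
        exact gluef_chopf hl
      · intro p hp
        rw [mem_sigma] at hp
        obtain ⟨hp1, hp2⟩ := hp
        have hsρ : p.1 ≤ ρ := by have := mem_range.mp hp1; omega
        have h1 : qc (gluef p.1 b p.2) (b+1) = p.1 :=
          qc_gluef hsρ (fun i => ((mem_Par.mp hp2).1 i).2)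
        obtain ⟨s, l'⟩ := p
        refine Sigma.ext h1 ?_
        simp only at h1 ⊢
        rw [h1]
        exact heq_of_eq chopf_gluef
      · intro l hl
        obtain ⟨hb, hmono⟩ := mem_Par.mp hl
        have h0 : qc l (b+2) = 0 := by
          rw [qc, Finset.card_eq_zero, Finset.filter_eq_empty_iff]
          intro i _
          have := (hb i).2
          omega
        have hB : (∏ j ∈ Icc 1 b,
              ((c j - (k + qc l (j+1))).choose (qc l j - qc l (j+1)) : ℝ)
                * (x j - x (j-1)) ^ (qc l j - qc l (j+1)))
            = ∏ j ∈ Icc 1 b,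
              ((c j - ((k + qc l (b+1)) + qc (chopf l (qc l (b+1))) (j+1))).choose
                  (qc (chopf l (qc l (b+1))) j - qc (chopf l (qc l (b+1))) (j+1)) : ℝ)
                * (x j - x (j-1)) ^ (qc (chopf l (qc l (b+1))) j - qc (chopf l (qc l (b+1))) (j+1)) := by
          refine Finset.prod_congr rfl fun j hj => ?_
          have hj' := mem_Icc.mp hj
          have e1 : qc (chopf l (qc l (b+1))) j = qc l j - qc l (b+1) :=
            qc_chopf hmono _ _
          have e2 : qc (chopf l (qc l (b+1))) (j+1) = qc l (j+1) - qc l (b+1) :=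
            qc_chopf hmono _ _
          have m1 : qc l (j+1) ≥ qc l (b+1) := qc_mono l (by omega)
          have m2 : qc l j ≥ qc l (j+1) := qc_mono l (by omega)
          rw [e1, e2,
            show qc l j - qc l (b+1) - (qc l (j+1) - qc l (b+1)) = qc l j - qc l (j+1) by omega,
            show k + qc l (b+1) + (qc l (j+1) - qc l (b+1)) = k + qc l (j+1) by omega]
        rw [prod_Icc_succ_top (by omega : 1 ≤ b + 1), hB, h0]
        simp only [Nat.add_zero, Nat.sub_zero, Nat.add_sub_cancel]
        ring
    rw [key, Finset.sum_sigma, Lw]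
    refine Finset.sum_congr rfl fun s hs => ?_
    rw [← ih (ρ - s) (k + s), Finset.mul_sum]
lemma sum_powersetCard_split {M : Type*} [AddCommMonoid M] (A : Finset ℕ)
    (P : ℕ → Prop) [DecidablePred P] (ρ : ℕ) (F : Finset ℕ → Finset ℕ → M) :
    (∑ S ∈ powersetCard ρ A, ∑ T ∈ (S.filter P).powerset, F T (S \ T))
      = ∑ s ∈ range (ρ+1), ∑ T ∈ powersetCard s (A.filter P),
          ∑ S' ∈ powersetCard (ρ-s) (A \ T), F T S' := by
  rw [← Finset.sum_sigma ((powersetCard ρ A)) (fun S => (S.filter P).powerset)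
    (fun p => F p.2 (p.1 \ p.2))]
  have h2 : (∑ p ∈ (range (ρ+1)).sigma
        (fun s => (powersetCard s (A.filter P)).sigma (fun T => powersetCard (ρ-s) (A \ T))),
        F p.2.1 p.2.2)
      = ∑ s ∈ range (ρ+1), ∑ T ∈ powersetCard s (A.filter P),
          ∑ S' ∈ powersetCard (ρ-s) (A \ T), F T S' := by
    rw [Finset.sum_sigma]
    exact Finset.sum_congr rfl fun s _ => Finset.sum_sigma _ _ _
  rw [← h2]
  refine Finset.sum_nbij' (fun p => ⟨p.2.card, p.2, p.1 \ p.2⟩)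
    (fun p => ⟨p.2.1 ∪ p.2.2, p.2.1⟩) ?_ ?_ ?_ ?_ ?_
  · rintro ⟨S, T⟩ hp
    rw [mem_sigma, mem_powersetCard, mem_powerset] at hp
    obtain ⟨⟨hSA, hSc⟩, hT⟩ := hp
    replace hSA : S ⊆ A := hSA
    replace hSc : S.card = ρ := hSc
    replace hT : T ⊆ S.filter P := hT
    have hTS : T ⊆ S := hT.trans (filter_subset _ _)
    rw [mem_sigma, mem_sigma, mem_range, mem_powersetCard, mem_powersetCard]
    refine ⟨?_, ⟨?_, rfl⟩, ?_, ?_⟩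
    · show T.card < ρ + 1
      have := card_le_card hTS
      omega
    · exact fun i hi => mem_filter.mpr ⟨hSA (hTS hi), (mem_filter.mp (hT hi)).2⟩
    · exact fun i hi => mem_sdiff.mpr ⟨hSA (mem_sdiff.mp hi).1, (mem_sdiff.mp hi).2⟩
    · rw [card_sdiff_of_subset hTS, hSc]
  · rintro ⟨s, T, S'⟩ hp
    rw [mem_sigma, mem_sigma, mem_range, mem_powersetCard, mem_powersetCard] at hp
    obtain ⟨hs, ⟨hTA, hTc⟩, hS'A, hS'c⟩ := hp
    replace hs : s < ρ + 1 := hs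
    replace hTA : T ⊆ A.filter P := hTA
    replace hTc : T.card = s := hTc
    replace hS'A : S' ⊆ A \ T := hS'A
    replace hS'c : S'.card = ρ - s := hS'c
    have hdisj : Disjoint T S' := by
      rw [Finset.disjoint_left]
      intro a haT haS'
      exact (mem_sdiff.mp (hS'A haS')).2 haT
    rw [mem_sigma, mem_powersetCard, mem_powerset]
    refine ⟨⟨?_, ?_⟩, ?_⟩
    · intro i hi
      rcases mem_union.mp hi with h | h
      · exact (mem_filter.mp (hTA h)).1
      · exact (mem_sdiff.mp (hS'A h)).1
    · rw [card_union_of_disjoint hdisj, hTc, hS'c]; omega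
    · intro i hi
      exact mem_filter.mpr ⟨mem_union_left _ hi, (mem_filter.mp (hTA hi)).2⟩
  · rintro ⟨S, T⟩ hp
    rw [mem_sigma, mem_powersetCard, mem_powerset] at hp
    have hTS : T ⊆ S := hp.2.trans (filter_subset _ _)
    have h1 : T ∪ S \ T = S := Finset.union_sdiff_of_subset hTS
    show (⟨T ∪ S \ T, T⟩ : (_ : Finset ℕ) × Finset ℕ) = ⟨S, T⟩
    rw [h1]
  · rintro ⟨s, T, S'⟩ hp
    rw [mem_sigma, mem_sigma, mem_range, mem_powersetCard, mem_powersetCard] at hp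
    obtain ⟨hs, ⟨hTA, hTc⟩, hS'A, hS'c⟩ := hp
    replace hs : s < ρ + 1 := hs
    replace hTA : T ⊆ A.filter P := hTA
    replace hTc : T.card = s := hTc
    replace hS'A : S' ⊆ A \ T := hS'A
    replace hS'c : S'.card = ρ - s := hS'c
    have hdisj : Disjoint T S' := by
      rw [Finset.disjoint_left]
      intro a haT haS'
      exact (mem_sdiff.mp (hS'A haS')).2 haT
    have h1 : (T ∪ S') \ T = S' := Finset.union_sdiff_cancel_left hdisj
    show (⟨T.card, T, (T ∪ S') \ T⟩ : (_ : ℕ) × (_ : Finset ℕ) × Finset ℕ) = ⟨s, T, S'⟩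
    rw [h1, hTc]
  · rintro ⟨S, T⟩ _
    rfl
lemma Lw_shift' (x : ℕ → ℝ) (b : ℕ) (c : ℕ → ℕ) (s ρ : ℕ) :
    Lw x b c s ρ = Lw x b (fun j => c j - s) 0 ρ := by
  have := Lw_shift x b c 0 s ρ
  rwa [zero_add] at this

lemma Lw_eq_esymm (x : ℕ → ℝ) (hx0 : x 0 = 0) (b : ℕ) : ∀ (A : Finset ℕ) (ρ : ℕ),
    Lw x b (fun j => (A.filter (fun i => j ≤ i)).card) 0 ρ
      = ∑ S ∈ powersetCard ρ A, ∏ i ∈ S, x (min i b) := by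
  induction b with
  | zero =>
    intro A ρ
    match ρ with
    | 0 => simp [Lw]
    | (m+1) =>
      rw [Lw, if_neg (by omega)]
      symm
      refine Finset.sum_eq_zero fun S hS => ?_
      obtain ⟨hSA, hSc⟩ := mem_powersetCard.mp hS
      have hne : S.Nonempty := by rw [← card_pos, hSc]; omega
      obtain ⟨i, hi⟩ := hne
      exact Finset.prod_eq_zero hi (by simp [hx0])
  | succ b ih =>
    intro A ρ
    set c : ℕ → ℕ := fun j => (A.filter (fun i => j ≤ i)).card with hc
    set d : ℝ := x (b+1) - x b with hd
    have key : Lw x (b+1) c 0 ρ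
        = ∑ s ∈ range (ρ+1), ∑ T ∈ powersetCard s (A.filter (fun i => b+1 ≤ i)),
            ∑ S' ∈ powersetCard (ρ-s) (A \ T), d ^ s * ∏ i ∈ S', x (min i b) := by
      rw [Lw]
      refine Finset.sum_congr rfl fun s hs => ?_
      have hTall : ∀ T ∈ powersetCard s (A.filter (fun i => b+1 ≤ i)),
          (∑ S' ∈ powersetCard (ρ-s) (A \ T), ∏ i ∈ S', x (min i b))
            = Lw x b (fun j => c j - s) 0 (ρ - s) := by
        intro T hT
        obtain ⟨hTA, hTc⟩ := mem_powersetCard.mp hT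
        rw [← ih (A \ T) (ρ-s)]
        refine (Lw_congr x b _ _ 0 (ρ-s) fun j hj1 hj2 => ?_).symm
        have h1 : (A \ T).filter (fun i => j ≤ i) = A.filter (fun i => j ≤ i) \ T := by
          ext i
          simp only [mem_filter, mem_sdiff]
          tauto
        have h2 : T ⊆ A.filter (fun i => j ≤ i) := by
          intro i hi
          have := mem_filter.mp (hTA hi)
          exact mem_filter.mpr ⟨this.1, by omega⟩
        rw [h1, card_sdiff_of_subset h2, hTc]
      rw [Nat.sub_zero, zero_add, Lw_shift',
        show (c (b+1)).choose s = (powersetCard s (A.filter (fun i => b+1 ≤ i))).card by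
          rw [card_powersetCard],
        mul_assoc, ← nsmul_eq_mul, ← sum_const]
      exact Finset.sum_congr rfl fun T hT => by rw [← Finset.mul_sum, hTall T hT]
    rw [key]
    have hSsplit : ∀ S ∈ powersetCard ρ A,
        (∏ i ∈ S, x (min i (b+1)))
          = ∑ T ∈ (S.filter (fun i => b+1 ≤ i)).powerset,
              d ^ T.card * ∏ i ∈ S \ T, x (min i b) := by
      intro S hSmem
      rw [← prod_filter_mul_prod_filter_not S (fun i => b+1 ≤ i)]
      have h1 : (∏ i ∈ S.filter (fun i => b+1 ≤ i), x (min i (b+1)))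
          = ∏ i ∈ S.filter (fun i => b+1 ≤ i), (d + x b) := by
        refine prod_congr rfl fun i hi => ?_
        have hge := (mem_filter.mp hi).2
        rw [min_eq_right (by omega), hd]
        ring
      rw [h1, Finset.prod_add, Finset.sum_mul]
      refine sum_congr rfl fun T hT => ?_
      have hTsub : T ⊆ S.filter (fun i => b+1 ≤ i) := mem_powerset.mp hT
      have e1 : (∏ _i ∈ T, d) = d ^ T.card := prod_const d
      have e4 : S \ T = (S.filter (fun i => b+1 ≤ i) \ T)
          ∪ S.filter (fun i => ¬ (b+1 ≤ i)) := by
        ext i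
        simp only [mem_sdiff, mem_union, mem_filter]
        constructor
        · intro ⟨hiS, hiT⟩
          by_cases hP : b+1 ≤ i
          · exact Or.inl ⟨⟨hiS, hP⟩, hiT⟩
          · exact Or.inr ⟨hiS, hP⟩
        · intro h
          rcases h with ⟨⟨hiS, _⟩, hiT⟩ | ⟨hiS, hP⟩
          · exact ⟨hiS, hiT⟩
          · exact ⟨hiS, fun hiT => hP (mem_filter.mp (hTsub hiT)).2⟩
      have hdisj2 : Disjoint (S.filter (fun i => b+1 ≤ i) \ T)
          (S.filter (fun i => ¬ (b+1 ≤ i))) := by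
        rw [Finset.disjoint_left]
        intro a ha hb2
        exact (mem_filter.mp hb2).2 (mem_filter.mp (mem_sdiff.mp ha).1).2
      rw [e4, Finset.prod_union hdisj2, e1]
      have e2 : (∏ i ∈ S.filter (fun i => b+1 ≤ i) \ T, x b)
          = ∏ i ∈ S.filter (fun i => b+1 ≤ i) \ T, x (min i b) := by
        refine prod_congr rfl fun i hi => ?_
        have := (mem_filter.mp (mem_sdiff.mp hi).1).2
        rw [min_eq_right (by omega)]
      have e3 : (∏ i ∈ S.filter (fun i => ¬ (b+1 ≤ i)), x (min i (b+1)))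
          = ∏ i ∈ S.filter (fun i => ¬ (b+1 ≤ i)), x (min i b) := by
        refine prod_congr rfl fun i hi => ?_
        have := (mem_filter.mp hi).2
        rw [min_eq_left (by omega), min_eq_left (by omega)]
      rw [← e2, ← e3]
      ring
    rw [Finset.sum_congr rfl hSsplit,
      sum_powersetCard_split A (fun i => b+1 ≤ i) ρ
        (fun T S' => d ^ T.card * ∏ i ∈ S', x (min i b))]
    refine Finset.sum_congr rfl fun s hs => Finset.sum_congr rfl fun T hT => ?_
    rw [(mem_powersetCard.mp hT).2]
lemma weight_eq {n r : ℕ} {x : ℕ → ℝ} {l : Fin r → ℕ} (hl : l ∈ Par n r) :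
    ((∏ j ∈ Icc 1 n,
        (1 : ℝ) / (Nat.factorial (univ.filter fun i : Fin r => l i = j).card)) *
      ∏ i : Fin r, ((n : ℝ) - (l i : ℝ) - ((i : ℕ) + 1 : ℝ) + 2) * (x (l i) - x (l i - 1)))
      = ∏ j ∈ Icc 1 n,
          (((n + 1 - j - qc l (j+1)).choose (qc l j - qc l (j+1)) : ℕ) : ℝ)
            * (x j - x (j-1)) ^ (qc l j - qc l (j+1)) := by
  obtain ⟨hb, hmono⟩ := mem_Par.mp hl
  have hfib : ∀ (j : ℕ) (i : Fin r), l i = j ↔ (qc l (j+1) ≤ i.val ∧ i.val < qc l j) := by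
    intro j i
    have e1 := qseg hmono j i
    have e2 := qseg hmono (j+1) i
    omega
  by_cases H : ∀ i : Fin r, l i + i.val ≤ n + 1
  · -- regular case: per-j identity
    rw [← Finset.prod_fiberwise_of_maps_to (g := l) (t := Icc 1 n)
        (fun i _ => mem_Icc.mpr (hb i))
        (fun i => ((n : ℝ) - (l i : ℝ) - ((i : ℕ) + 1 : ℝ) + 2) * (x (l i) - x (l i - 1))),
      ← Finset.prod_mul_distrib]
    refine Finset.prod_congr rfl fun j hj => ?_
    obtain ⟨hj1, hj2⟩ := mem_Icc.mp hj
    set p := qc l (j+1) with hp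
    set m := qc l j - qc l (j+1) with hm
    have hqm : qc l (j+1) ≤ qc l j := qc_mono l (by omega)
    have hqr : qc l j ≤ r := qc_le l j
    have hfib2 : (univ.filter fun i : Fin r => l i = j)
        = univ.filter fun i : Fin r => p ≤ i.val ∧ i.val < p + m := by
      ext i
      simp only [mem_filter, mem_univ, true_and, hfib j i]
      omega
    have hcard : (univ.filter fun i : Fin r => l i = j).card = m := mcard_eq hmono j
    have hinner : (∏ i ∈ univ.filter fun i : Fin r => l i = j,
        ((n : ℝ) - (l i : ℝ) - ((i : ℕ) + 1 : ℝ) + 2) * (x (l i) - x (l i - 1)))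
        = (∏ i ∈ univ.filter fun i : Fin r => l i = j,
            ((n : ℝ) - j - ((i : ℕ) + 1 : ℝ) + 2)) * (x j - x (j-1)) ^ m := by
      have e0 : (∏ i ∈ univ.filter fun i : Fin r => l i = j,
          ((n : ℝ) - (l i : ℝ) - ((i : ℕ) + 1 : ℝ) + 2) * (x (l i) - x (l i - 1)))
          = ∏ i ∈ univ.filter fun i : Fin r => l i = j,
            ((n : ℝ) - j - ((i : ℕ) + 1 : ℝ) + 2) * (x j - x (j-1)) := by
        refine Finset.prod_congr rfl fun i hi => ?_
        have : l i = j := (mem_filter.mp hi).2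
        rw [this]
      rw [e0, Finset.prod_mul_distrib, Finset.prod_const, hcard]
    have hdesc : (∏ i ∈ univ.filter fun i : Fin r => l i = j,
        ((n : ℝ) - j - ((i : ℕ) + 1 : ℝ) + 2)) = (((n + 1 - j - p).descFactorial m : ℕ) : ℝ) := by
      rcases Nat.eq_zero_or_pos m with hm0 | hmpos
      · have hemp : (univ.filter fun i : Fin r => l i = j) = ∅ := by
          rw [hfib2]
          ext i
          simp only [mem_filter, mem_univ, true_and, notMem_empty, iff_false]
          omega
        rw [hemp, hm0]
        simp
      · have hpr : p + m ≤ r := by omega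
        have hpn : j + p ≤ n + 1 := by
          have hmem : l ⟨p, by omega⟩ = j :=
            (hfib j ⟨p, by omega⟩).mpr (by constructor <;> simp <;> omega)
          have hH := H ⟨p, by omega⟩
          rw [hmem] at hH
          simpa using hH
        rw [← prod_range_cast_sub_eq_descFactorial]
        refine Finset.prod_bij' (fun a _ => a.val - p)
          (fun t ht => (⟨p + t, by have := mem_range.mp ht; omega⟩ : Fin r))
          ?_ ?_ ?_ ?_ ?_
        · intro a ha
          rw [hfib2] at ha
          have hb1 := (mem_filter.mp ha).2
          exact mem_range.mpr (show a.val - p < m by omega)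
        · intro t ht
          have htm := mem_range.mp ht
          exact mem_filter.mpr ⟨mem_univ _,
            (hfib j _).mpr (by constructor <;> simp <;> omega)⟩
        · intro a ha
          rw [hfib2] at ha
          have hb1 := (mem_filter.mp ha).2
          exact Fin.ext (by simp; omega)
        · intro t ht
          simp
        · intro a ha
          rw [hfib2] at ha
          have hb1 := (mem_filter.mp ha).2
          have e : ((n + 1 - j - p : ℕ) : ℝ) = (n : ℝ) + 1 - j - p := by
            rw [Nat.cast_sub (by omega : p ≤ n + 1 - j), Nat.cast_sub (by omega : j ≤ n + 1)]
            push_cast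
            ring
          have e2 : ((a.val - p : ℕ) : ℝ) = (a.val : ℝ) - p := by
            rw [Nat.cast_sub hb1.1]
          rw [e, e2]
          ring
    rw [hinner, hcard, hdesc, cast_choose_eq]
    ring
  · -- degenerate case: both sides vanish
    push_neg at H
    obtain ⟨iw, hiw⟩ := H
    have hex : ∃ i : Fin r, l i + i.val = n + 1 := by
      have hstep : ∀ k : ℕ, ∀ hk : k < r, n + 2 ≤ l ⟨k, hk⟩ + k →
          ∃ i : Fin r, l i + i.val = n + 1 := by
        intro k
        induction k with
        | zero =>
          intro hk h0
          have := (hb ⟨0, hk⟩).2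
          omega
        | succ k ihk =>
          intro hk hk1
          have hkk : k < r := by omega
          have hmo : l ⟨k+1, hk⟩ ≤ l ⟨k, hkk⟩ := hmono _ _ (Fin.mk_le_mk.mpr (by omega))
          rcases lt_trichotomy (l ⟨k, hkk⟩ + k) (n+1) with h | h | h
          · omega
          · exact ⟨⟨k, hkk⟩, h⟩
          · exact ihk hkk (by omega)
      exact hstep iw.val iw.isLt (by rw [Fin.eta]; omega)
    obtain ⟨i1, hi1⟩ := hex
    have hlow : 1 ≤ l i1 ∧ l i1 ≤ n := hb i1
    have hon : (∏ i : Fin r, ((n : ℝ) - (l i : ℝ) - ((i : ℕ) + 1 : ℝ) + 2)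
        * (x (l i) - x (l i - 1))) = 0 := by
      refine Finset.prod_eq_zero (mem_univ i1) ?_
      have hc : ((l i1 : ℝ) + ((i1 : ℕ) : ℝ)) = (n : ℝ) + 1 := by exact_mod_cast hi1
      apply mul_eq_zero_of_left
      linarith
    rw [hon, mul_zero]
    symm
    refine Finset.prod_eq_zero (i := l i1) (mem_Icc.mpr ⟨hlow.1, hlow.2⟩) ?_
    have hq1 : qc l (l i1 + 1) ≤ i1.val ∧ i1.val < qc l (l i1) := (hfib (l i1) i1).mp rfl
    have hch : (n + 1 - l i1 - qc l (l i1 + 1)).choose (qc l (l i1) - qc l (l i1 + 1)) = 0 := by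
      apply Nat.choose_eq_zero_of_lt
      omega
    rw [hch]
    simp

/-- The combinatorial identity
`Σ_λ [∏_{j=1}^n 1/m_j(λ)!]·[∏_{i=1}^r (n−λ_i−i+2)(x_{λ_i} − x_{λ_i−1})] = e_r(x_1,…,x_n)`,
the sum being over partitions `λ = (λ_1 ≥ ⋯ ≥ λ_r ≥ 1)` with exactly `r` parts and
`λ_1 ≤ n`, where `x_0 = 0`.  Partitions are encoded as antitone functions
`Fin r → ℕ` with values in `[1, n]`. -/
theorem partition_elementary_symmetric_identity (n r : ℕ) (hn : 1 ≤ n) (hr : r ≤ n)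
    (x : ℕ → ℝ) (hx0 : x 0 = 0) :
    (∑' lam : {l : Fin r → ℕ //
        (∀ i j : Fin r, i ≤ j → l j ≤ l i) ∧ ∀ i : Fin r, 1 ≤ l i ∧ l i ≤ n},
      (∏ j ∈ Finset.Icc 1 n,
          (1 : ℝ) / (Nat.factorial (Finset.univ.filter fun i : Fin r => lam.1 i = j).card)) *
        ∏ i : Fin r,
          ((n : ℝ) - (lam.1 i : ℝ) - ((i : ℕ) + 1 : ℝ) + 2) *
            (x (lam.1 i) - x (lam.1 i - 1))) =
      ∑ S ∈ Finset.powersetCard r (Finset.Icc 1 n), ∏ j ∈ S, x j := by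
  classical
  haveI fin : Fintype {l : Fin r → ℕ //
      (∀ i j : Fin r, i ≤ j → l j ≤ l i) ∧ ∀ i : Fin r, 1 ≤ l i ∧ l i ≤ n} := by
    refine Fintype.ofInjective
      (fun p i => (⟨p.1 i, by have := (p.2.2 i).2; omega⟩ : Fin (n+1))) ?_
    intro p q h
    refine Subtype.ext (funext fun i => ?_)
    have := congrFun h i
    simpa using this
  rw [tsum_fintype]
  rw [← Finset.sum_subtype (Par n r)
    (fun l => by rw [mem_Par]; constructor <;> (intro h; exact ⟨h.2, h.1⟩))
    (fun l => (∏ j ∈ Finset.Icc 1 n,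
          (1 : ℝ) / (Nat.factorial (Finset.univ.filter fun i : Fin r => l i = j).card)) *
        ∏ i : Fin r,
          ((n : ℝ) - (l i : ℝ) - ((i : ℕ) + 1 : ℝ) + 2) * (x (l i) - x (l i - 1)))]
  have hcnt : ∀ j, 1 ≤ j → ((Icc 1 n).filter (fun i => j ≤ i)).card = n + 1 - j := by
    intro j hj
    have : (Icc 1 n).filter (fun i => j ≤ i) = Icc j n := by
      ext i
      simp only [mem_filter, mem_Icc]
      omega
    rw [this, Nat.card_Icc]
  have step : ∀ l ∈ Par n r,
      ((∏ j ∈ Finset.Icc 1 n,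
          (1 : ℝ) / (Nat.factorial (Finset.univ.filter fun i : Fin r => l i = j).card)) *
        ∏ i : Fin r,
          ((n : ℝ) - (l i : ℝ) - ((i : ℕ) + 1 : ℝ) + 2) * (x (l i) - x (l i - 1)))
      = ∏ j ∈ Icc 1 n,
          (((((Icc 1 n).filter (fun i => j ≤ i)).card - (0 + qc l (j+1))).choose
              (qc l j - qc l (j+1)) : ℕ) : ℝ)
            * (x j - x (j-1)) ^ (qc l j - qc l (j+1)) := by
    intro l hl
    rw [weight_eq hl]
    refine Finset.prod_congr rfl fun j hj => ?_
    rw [hcnt j (mem_Icc.mp hj).1, zero_add]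
  rw [Finset.sum_congr rfl step,
    sum_Par_eq_Lw x (fun j => ((Icc 1 n).filter (fun i => j ≤ i)).card) n r 0,
    Lw_eq_esymm x hx0 n (Icc 1 n) r]
  refine Finset.sum_congr rfl fun S hS => Finset.prod_congr rfl fun i hi => ?_
  have := mem_Icc.mp ((mem_powersetCard.mp hS).1 hi)
  rw [min_eq_left (by omega)]
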